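/- Let N = k^t q with k ≥ 2, t ≥ 1, gcd(q,k)=1, and let f(A) = (kA + A_{t-1}) mod N as above. Then the orbit of 1 under f has length exactly ord_k(N-q); i.e., the least r ≥ 1 with f^r(1) = 1 equals the multiplicative order of k modulo N - q. -/

import Mathlib

/-- One step of the conjugacy: if `A = ψ y = y + 1 + y / D` with `y < M = q * D`,
`D = k ^ t - 1`, then `f A = ψ y'` where `y' = (k * y + (k - 1)) % M`. -/
private lemma orbit_step (k t q : ℕ) (hk : 2 ≤ k) (ht : 1 ≤ t) (hq : 1 ≤ q)
    (D : ℕ) (hD1 : D + 1 = k ^ t) (y : ℕ) (hy : y < q * D) :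
    (k * (y + 1 + y / D) + (y + 1 + y / D) / k ^ (t - 1) % k) % (k ^ t * q)
      = (k * y + (k - 1)) % (q * D) + 1 + (k * y + (k - 1)) % (q * D) / D := by
  have hP : k ^ t = k * k ^ (t - 1) := by
    conv_lhs => rw [show t = (t - 1) + 1 by omega]
    rw [pow_succ]; exact mul_comm _ _
  rw [hP] at hD1 ⊢
  set P := k ^ (t - 1) with hPdef
  have hPpos : 0 < P := by rw [hPdef]; exact pow_pos (by omega) _
  have hDpos : 0 < D := by nlinarith
  -- decompose y = D * a + b
  obtain ⟨a, b, hblt, hyab⟩ : ∃ a b, b < D ∧ y = D * a + b :=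
    ⟨y / D, y % D, Nat.mod_lt _ hDpos, (Nat.div_add_mod y D).symm⟩
  have hyD : y / D = a := by
    rw [hyab, Nat.mul_add_div hDpos, Nat.div_eq_of_lt hblt]
    omega
  -- decompose b + 1 = P * e + g
  obtain ⟨e, g, hglt, hceg⟩ : ∃ e g, g < P ∧ b + 1 = P * e + g :=
    ⟨(b + 1) / P, (b + 1) % P, Nat.mod_lt _ hPpos, (Nat.div_add_mod _ P).symm⟩
  have hce : (b + 1) / P = e := by
    rw [hceg, Nat.mul_add_div hPpos, Nat.div_eq_of_lt hglt]
    omega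
  have hek : e < k := by
    by_contra h
    push_neg at h
    have h1 : P * k ≤ P * e := Nat.mul_le_mul_left _ h
    have h2 : P * k = k * P := by ring
    omega
  -- decompose a * k + e = q * m + a'
  obtain ⟨m, a', ha'q, hmq⟩ : ∃ m a', a' < q ∧ a * k + e = q * m + a' :=
    ⟨(a * k + e) / q, (a * k + e) % q, Nat.mod_lt _ (by omega), (Nat.div_add_mod _ q).symm⟩
  -- A = a * (k * P) + (b + 1)
  have hA : y + 1 + y / D = a * (k * P) + (b + 1) := by
    have e0 : D * a = a * D := by ring
    have e1 : a * (k * P) = a * D + a := by rw [← hD1]; ring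
    rw [hyD]
    omega
  -- the digit of A
  have hdig : (a * (k * P) + (b + 1)) / P % k = e := by
    have e2 : a * (k * P) + (b + 1) = (b + 1) + P * (a * k) := by ring
    rw [e2, Nat.add_mul_div_left _ _ hPpos, hce, Nat.add_mul_mod_self_right]
    exact Nat.mod_eq_of_lt hek
  have hkc : k * (b + 1) + e = e * (k * P) + (k * g + e) := by
    rw [hceg]; ring
  have hc'le : k * g + e ≤ D := by
    have h1 : k * (g + 1) ≤ k * P := Nat.mul_le_mul_left k hglt
    have h2 : k * (g + 1) = k * g + k := by ring
    omega
  have hc'pos : 1 ≤ k * g + e := by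
    rcases Nat.eq_zero_or_pos g with h | h
    · rcases Nat.eq_zero_or_pos e with he0 | he0
      · exfalso; rw [h, he0] at hceg; simp at hceg
      · rw [h]; omega
    · have h1 : k * 1 ≤ k * g := Nat.mul_le_mul_left k h
      have h2 : k * 1 = k := by ring
      omega
  obtain ⟨c'', hc''⟩ : ∃ c'', k * g + e = c'' + 1 := ⟨k * g + e - 1, by omega⟩
  -- LHS
  have hLval : k * (a * (k * P) + (b + 1)) + e
      = a' * (k * P) + (k * g + e) + k * P * q * m := by
    have e3 : k * (a * (k * P) + (b + 1)) + e = (a * k) * (k * P) + (k * (b + 1) + e) := by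
      ring
    have e4 : (a * k) * (k * P) + (e * (k * P) + (k * g + e))
        = (a * k + e) * (k * P) + (k * g + e) := by ring
    have e5 : (a * k + e) * (k * P) = (q * m + a') * (k * P) := by rw [hmq]
    have e6 : (q * m + a') * (k * P) + (k * g + e)
        = a' * (k * P) + (k * g + e) + k * P * q * m := by ring
    omega
  have hLlt : a' * (k * P) + (k * g + e) < k * P * q := by
    have h1 : (a' + 1) * (k * P) ≤ q * (k * P) := Nat.mul_le_mul_right _ ha'q
    have h2 : (a' + 1) * (k * P) = a' * (k * P) + k * P := by ring
    have h3 : q * (k * P) = k * P * q := by ring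
    omega
  have hLHS : (k * (y + 1 + y / D) + (y + 1 + y / D) / P % k) % (k * P * q)
      = a' * (k * P) + (k * g + e) := by
    rw [hA, hdig, hLval, Nat.add_mul_mod_self_left]
    exact Nat.mod_eq_of_lt hLlt
  -- RHS
  have hRval : k * y + (k - 1) = a' * D + c'' + q * D * m := by
    have f1 : k * (y + 1) = k * y + k := by ring
    have f2 : k * (y + 1) = k * (D * a) + k * (b + 1) := by rw [hyab]; ring
    have g1 : e * (k * P) = e * D + e := by rw [← hD1]; ring
    have f4 : k * (D * a) + (e * D + (k * g + e)) = (a * k + e) * D + (k * g + e) := by ring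
    have f5 : (a * k + e) * D = (q * m + a') * D := by rw [hmq]
    have f6 : (q * m + a') * D = a' * D + q * D * m := by ring
    omega
  have hRlt : a' * D + c'' < q * D := by
    have h1 : (a' + 1) * D ≤ q * D := Nat.mul_le_mul_right _ ha'q
    have h2 : (a' + 1) * D = a' * D + D := by ring
    omega
  have hRmod : (k * y + (k - 1)) % (q * D) = a' * D + c'' := by
    rw [hRval, Nat.add_mul_mod_self_left]
    exact Nat.mod_eq_of_lt hRlt
  have hRdiv : (a' * D + c'') / D = a' := by
    have h1 : a' * D + c'' = c'' + D * a' := by ring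
    rw [h1, Nat.add_mul_div_left _ _ hDpos, Nat.div_eq_of_lt (by omega)]
    omega
  rw [hLHS, hRmod, hRdiv]
  have g2 : a' * (k * P) = a' * D + a' := by rw [← hD1]; ring
  omega

theorem orbit_of_one (N k t q : ℕ) (hk : 2 ≤ k) (ht : 1 ≤ t) (hq : 1 ≤ q)
    (hco : Nat.Coprime q k) (hN : N = k ^ t * q)
    (f : ℕ → ℕ) (hf : ∀ A, f A = (k * A + A / k ^ (t - 1) % k) % N) :
    IsLeast {r : ℕ | 1 ≤ r ∧ f^[r] 1 = 1} (orderOf (k : ZMod (N - q))) := by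
  have hktpos : 1 ≤ k ^ t := Nat.one_le_pow _ _ (by omega)
  obtain ⟨D, hD1⟩ : ∃ D, D + 1 = k ^ t := ⟨k ^ t - 1, by omega⟩
  have hDpos : 0 < D := by
    have : k ≤ k ^ t := Nat.le_self_pow (by omega) k
    omega
  set M := N - q with hM
  have hMqD : M = q * D := by
    have h0 : q * (D + 1) = q * D + q := by ring
    have h1 : N = q * (D + 1) := by rw [hN, ← hD1]; ring
    omega
  have hMpos : 0 < M := by
    have : 1 * 1 ≤ q * D := Nat.mul_le_mul hq hDpos
    omega
  -- the invariant
  have hinv : ∀ r : ℕ, ∃ y : ℕ, y < M ∧ (y + 1) ≡ k ^ r [MOD M] ∧ f^[r] 1 = y + 1 + y / D := by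
    intro r
    induction r with
    | zero =>
      exact ⟨0, hMpos, by simp [Nat.ModEq], by simp⟩
    | succ n ih =>
      obtain ⟨y, hyM, hmod, hit⟩ := ih
      refine ⟨(k * y + (k - 1)) % (q * D), by rw [hMqD]; exact Nat.mod_lt _ (by positivity),
        ?_, ?_⟩
      · have h1 : (k * y + (k - 1)) % (q * D) ≡ k * y + (k - 1) [MOD M] := by
          rw [hMqD]; exact Nat.mod_modEq _ _
        have h2 : (k * y + (k - 1)) % (q * D) + 1 ≡ k * y + (k - 1) + 1 [MOD M] :=
          h1.add_right 1
        have h3 : k * y + (k - 1) + 1 = k * (y + 1) := by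
          have h4 : k * (y + 1) = k * y + k := by ring
          omega
        rw [h3] at h2
        have h4 : k * (y + 1) ≡ k * k ^ n [MOD M] := hmod.mul_left k
        have h5 : k * k ^ n = k ^ (n + 1) := (pow_succ' k n).symm
        exact h2.trans (h5 ▸ h4)
      · rw [Function.iterate_succ_apply', hit, hf, hN]
        exact orbit_step k t q hk ht hq D hD1 y (by rw [← hMqD]; exact hyM)
  -- characterization of return to 1
  have hchar : ∀ r : ℕ, f^[r] 1 = 1 ↔ k ^ r ≡ 1 [MOD M] := by
    intro r
    obtain ⟨y, hyM, hmod, hit⟩ := hinv r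
    constructor
    · intro h
      have hy0 : y = 0 := by
        rw [h] at hit
        have h5 : y + 1 ≤ 1 := le_of_le_of_eq (Nat.le_add_right (y + 1) (y / D)) hit.symm
        omega
      rw [hy0] at hmod
      simpa using hmod.symm
    · intro h
      have h1 : y + 1 ≡ 0 + 1 [MOD M] := by simpa using hmod.trans h
      have h2 : y ≡ 0 [MOD M] := Nat.ModEq.add_right_cancel' 1 h1
      have h3 : M ∣ y := (Nat.modEq_zero_iff_dvd).mp h2
      have hy0 : y = 0 := Nat.eq_zero_of_dvd_of_lt h3 hyM
      rw [hit, hy0]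
      simp
  -- coprimality of k and M
  have hcop : Nat.Coprime k M := by
    rw [hMqD]
    refine Nat.Coprime.mul_right hco.symm ?_
    have h1 : Nat.Coprime (k ^ t) D := by rw [← hD1]; simp
    exact (Nat.coprime_pow_left_iff (by omega) k D).mp h1
  -- order facts
  have hcast : ∀ r : ℕ, (k : ZMod M) ^ r = 1 ↔ k ^ r ≡ 1 [MOD M] := by
    intro r
    have h1 : ((k ^ r : ℕ) : ZMod M) = ((1 : ℕ) : ZMod M) ↔ k ^ r ≡ 1 [MOD M] :=
      ZMod.natCast_eq_natCast_iff _ _ _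
    rw [← h1]
    push_cast
    rfl
  have hfin : IsOfFinOrder (k : ZMod M) :=
    isOfFinOrder_iff_pow_eq_one.mpr ⟨Nat.totient M, Nat.totient_pos.mpr hMpos,
      (hcast _).mpr (Nat.ModEq.pow_totient hcop)⟩
  have hord : 0 < orderOf (k : ZMod M) := hfin.orderOf_pos
  constructor
  · exact ⟨hord, (hchar _).mpr ((hcast _).mp (pow_orderOf_eq_one _))⟩
  · rintro r ⟨hr1, hr2⟩
    exact Nat.le_of_dvd (by omega)
      (orderOf_dvd_iff_pow_eq_one.mpr ((hcast _).mpr ((hchar r).mp hr2)))
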